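/- Let h₁, h₂ ∈ L²(ℝ²; ℂ) with ∫|h₁|² = ∫|h₂|² = 1 and finite second moments ∫ |x|²|hᵢ(x)|² dx < ∞ (i = 1,2). Let X_i = ∫ x |hᵢ(x)|² dx ∈ ℝ² be the vector means and D_i = ∫ |x − X_i|² |hᵢ(x)|² dx the isotropic variances, and set r = |X₁ − X₂|/2, assumed positive. Then |∫ h₁(x) conj(h₂(x)) dx| ≤ √D₁/r + √D₂/r + √(D₁ D₂)/r². -/

import Mathlib

open MeasureTheory

section Aux

open Set

variable {α : Type*} [MeasurableSpace α] {μ : Measure α}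

private lemma rpow_two' (a : ℝ) : a ^ (2:ℝ) = a ^ 2 := by
  rw [show (2:ℝ) = ((2:ℕ):ℝ) by norm_num, Real.rpow_natCast]

private lemma my_cs {f g : α → ℂ} (hf : MemLp f 2 μ) (hg : MemLp g 2 μ) :
    ‖∫ x, f x * (starRingEnd ℂ) (g x) ∂μ‖ ≤
      Real.sqrt (∫ x, ‖f x‖ ^ 2 ∂μ) * Real.sqrt (∫ x, ‖g x‖ ^ 2 ∂μ) := by
  have h2 : (2:ℝ).HolderConjugate 2 := Real.HolderConjugate.two_two
  have hof : ENNReal.ofReal (2:ℝ) = 2 := by norm_num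
  have hfn : MemLp (fun x => ‖f x‖) (ENNReal.ofReal (2:ℝ)) μ := by rw [hof]; exact hf.norm
  have hgn : MemLp (fun x => ‖g x‖) (ENNReal.ofReal (2:ℝ)) μ := by rw [hof]; exact hg.norm
  calc ‖∫ x, f x * (starRingEnd ℂ) (g x) ∂μ‖
      ≤ ∫ x, ‖f x * (starRingEnd ℂ) (g x)‖ ∂μ := norm_integral_le_integral_norm _
    _ = ∫ x, ‖f x‖ * ‖g x‖ ∂μ := by simp [norm_mul]
    _ ≤ (∫ x, ‖f x‖ ^ (2:ℝ) ∂μ) ^ (1/(2:ℝ)) * (∫ x, ‖g x‖ ^ (2:ℝ) ∂μ) ^ (1/(2:ℝ)) :=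
        integral_mul_le_Lp_mul_Lq_of_nonneg h2
          (Filter.Eventually.of_forall fun x => norm_nonneg _)
          (Filter.Eventually.of_forall fun x => norm_nonneg _) hfn hgn
    _ = Real.sqrt (∫ x, ‖f x‖ ^ 2 ∂μ) * Real.sqrt (∫ x, ‖g x‖ ^ 2 ∂μ) := by
        simp_rw [rpow_two', Real.sqrt_eq_rpow]

private lemma my_csInd {f g : α → ℂ} (hf : MemLp f 2 μ) (hg : MemLp g 2 μ)
    {s t : Set α} (hs : MeasurableSet s) (ht : MeasurableSet t) :
    ‖∫ x in s ∩ t, f x * (starRingEnd ℂ) (g x) ∂μ‖ ≤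
      Real.sqrt (∫ x in s, ‖f x‖ ^ 2 ∂μ) * Real.sqrt (∫ x in t, ‖g x‖ ^ 2 ∂μ) := by
  have key := my_cs (hf.indicator hs) (hg.indicator ht)
  have e1 : (fun x => s.indicator f x * (starRingEnd ℂ) (t.indicator g x)) =
      (s ∩ t).indicator fun x => f x * (starRingEnd ℂ) (g x) := by
    funext x
    by_cases hxs : x ∈ s <;> by_cases hxt : x ∈ t <;>
      simp [Set.indicator_apply, hxs, hxt]
  have e2 : ∀ (u : Set α) (h : α → ℂ) (x : α), ‖u.indicator h x‖ ^ 2 =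
      u.indicator (fun x => ‖h x‖ ^ 2) x := by
    intro u h x
    by_cases hx : x ∈ u <;> simp [Set.indicator_apply, hx]
  rw [e1] at key
  simp_rw [e2] at key
  rwa [integral_indicator (hs.inter ht), integral_indicator hs, integral_indicator ht] at key

private lemma my_momInt (h : EuclideanSpace ℝ (Fin 2) → ℂ)
    (H : MemLp h 2 (volume : Measure (EuclideanSpace ℝ (Fin 2))))
    (m : Integrable (fun x : EuclideanSpace ℝ (Fin 2) => ‖x‖ ^ 2 * ‖h x‖ ^ 2))
    (X : EuclideanSpace ℝ (Fin 2)) :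
    Integrable (fun x : EuclideanSpace ℝ (Fin 2) => ‖x - X‖ ^ 2 * ‖h x‖ ^ 2) := by
  have hsq : Integrable (fun x : EuclideanSpace ℝ (Fin 2) => ‖h x‖ ^ 2) := H.norm.integrable_sq
  have hg : Integrable (fun x : EuclideanSpace ℝ (Fin 2) =>
      2 * (‖x‖ ^ 2 * ‖h x‖ ^ 2) + (2 * ‖X‖ ^ 2) * ‖h x‖ ^ 2) :=
    (m.const_mul 2).add (hsq.const_mul _)
  refine hg.mono' ?_ ?_
  · exact ((continuous_id.sub continuous_const).norm.pow 2).aestronglyMeasurable.mul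
      ((H.aestronglyMeasurable.norm.aemeasurable.pow_const 2).aestronglyMeasurable)
  · refine Filter.Eventually.of_forall fun x => ?_
    have h1 : ‖x - X‖ ≤ ‖x‖ + ‖X‖ := norm_sub_le _ _
    have h2 : (0:ℝ) ≤ ‖h x‖ ^ 2 := sq_nonneg _
    rw [Real.norm_of_nonneg (by positivity)]
    have h3 : ‖x - X‖ ^ 2 ≤ 2 * ‖x‖ ^ 2 + 2 * ‖X‖ ^ 2 := by
      nlinarith [norm_nonneg (x - X), sq_nonneg (‖x‖ - ‖X‖)]
    nlinarith [mul_le_mul_of_nonneg_right h3 h2]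

private lemma my_cheb (h : EuclideanSpace ℝ (Fin 2) → ℂ) (X : EuclideanSpace ℝ (Fin 2))
    {r : ℝ} (hrpos : 0 < r)
    (hsq : Integrable (fun x : EuclideanSpace ℝ (Fin 2) => ‖h x‖ ^ 2))
    (hmom : Integrable (fun x : EuclideanSpace ℝ (Fin 2) => ‖x - X‖ ^ 2 * ‖h x‖ ^ 2))
    (s : Set (EuclideanSpace ℝ (Fin 2))) (hs : MeasurableSet s)
    (hsub : ∀ x ∈ s, r ≤ ‖x - X‖) :
    ∫ x in s, ‖h x‖ ^ 2 ≤
      (∫ x : EuclideanSpace ℝ (Fin 2), ‖x - X‖ ^ 2 * ‖h x‖ ^ 2) / r ^ 2 := by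
  have step1 : ∫ x in s, ‖h x‖ ^ 2 ≤ ∫ x in s, (‖x - X‖ ^ 2 * ‖h x‖ ^ 2) / r ^ 2 := by
    refine setIntegral_mono_on hsq.integrableOn (hmom.div_const _).integrableOn hs ?_
    intro x hx
    rw [le_div_iff₀ (by positivity)]
    have hle := hsub x hx
    have hr2 : r ^ 2 ≤ ‖x - X‖ ^ 2 := by nlinarith
    nlinarith [mul_le_mul_of_nonneg_left hr2 (sq_nonneg (‖h x‖))]
  have step2 : ∫ x in s, (‖x - X‖ ^ 2 * ‖h x‖ ^ 2) / r ^ 2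
      = (∫ x in s, ‖x - X‖ ^ 2 * ‖h x‖ ^ 2) / r ^ 2 := integral_div _ _
  have step3 : ∫ x in s, ‖x - X‖ ^ 2 * ‖h x‖ ^ 2
      ≤ ∫ x : EuclideanSpace ℝ (Fin 2), ‖x - X‖ ^ 2 * ‖h x‖ ^ 2 :=
    setIntegral_le_integral hmom (Filter.Eventually.of_forall fun x => by positivity)
  calc ∫ x in s, ‖h x‖ ^ 2 ≤ _ := step1
    _ = _ := step2
    _ ≤ _ := div_le_div_of_nonneg_right step3 (by positivity)

end Aux

/-- Isotropic Chebyshev lemma in `L²(ℝ²)`: bound on the inner product of two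
unit-norm windows in terms of their vector means and isotropic variances. -/
theorem stmt6 (h₁ h₂ : EuclideanSpace ℝ (Fin 2) → ℂ)
    (H1 : MemLp h₁ 2 (volume : Measure (EuclideanSpace ℝ (Fin 2))))
    (H2 : MemLp h₂ 2 (volume : Measure (EuclideanSpace ℝ (Fin 2))))
    (n1 : ∫ x : EuclideanSpace ℝ (Fin 2), ‖h₁ x‖ ^ 2 = 1)
    (n2 : ∫ x : EuclideanSpace ℝ (Fin 2), ‖h₂ x‖ ^ 2 = 1)
    (m1 : Integrable (fun x : EuclideanSpace ℝ (Fin 2) => ‖x‖ ^ 2 * ‖h₁ x‖ ^ 2))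
    (m2 : Integrable (fun x : EuclideanSpace ℝ (Fin 2) => ‖x‖ ^ 2 * ‖h₂ x‖ ^ 2))
    (X₁ X₂ : EuclideanSpace ℝ (Fin 2)) (D₁ D₂ r : ℝ)
    (hX₁ : X₁ = ∫ x : EuclideanSpace ℝ (Fin 2), ‖h₁ x‖ ^ 2 • x)
    (hX₂ : X₂ = ∫ x : EuclideanSpace ℝ (Fin 2), ‖h₂ x‖ ^ 2 • x)
    (hD₁ : D₁ = ∫ x : EuclideanSpace ℝ (Fin 2), ‖x - X₁‖ ^ 2 * ‖h₁ x‖ ^ 2)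
    (hD₂ : D₂ = ∫ x : EuclideanSpace ℝ (Fin 2), ‖x - X₂‖ ^ 2 * ‖h₂ x‖ ^ 2)
    (hr : r = ‖X₁ - X₂‖ / 2) (hrpos : 0 < r) :
    ‖∫ x : EuclideanSpace ℝ (Fin 2), h₁ x * (starRingEnd ℂ) (h₂ x)‖ ≤
      Real.sqrt D₁ / r + Real.sqrt D₂ / r + Real.sqrt (D₁ * D₂) / r ^ 2 := by
  set f : EuclideanSpace ℝ (Fin 2) → ℂ := fun x => h₁ x * (starRingEnd ℂ) (h₂ x) with hf_def
  -- basic facts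
  have hsq1 : Integrable (fun x : EuclideanSpace ℝ (Fin 2) => ‖h₁ x‖ ^ 2) := H1.norm.integrable_sq
  have hsq2 : Integrable (fun x : EuclideanSpace ℝ (Fin 2) => ‖h₂ x‖ ^ 2) := H2.norm.integrable_sq
  have hmom1 := my_momInt h₁ H1 m1 X₁
  have hmom2 := my_momInt h₂ H2 m2 X₂
  have hD₁0 : 0 ≤ D₁ := hD₁ ▸ integral_nonneg fun x => by positivity
  have hD₂0 : 0 ≤ D₂ := hD₂ ▸ integral_nonneg fun x => by positivity
  -- integrability of f
  have hconjm : AEStronglyMeasurable (fun x : EuclideanSpace ℝ (Fin 2) =>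
      (starRingEnd ℂ) (h₂ x)) volume :=
    Complex.continuous_conj.comp_aestronglyMeasurable H2.aestronglyMeasurable
  have hgint : Integrable (fun x : EuclideanSpace ℝ (Fin 2) => ‖h₁ x‖ ^ 2 + ‖h₂ x‖ ^ 2) :=
    hsq1.add hsq2
  have hfint : Integrable f := by
    refine hgint.mono' (H1.aestronglyMeasurable.mul hconjm) ?_
    refine Filter.Eventually.of_forall fun x => ?_
    simp only [hf_def, norm_mul, RCLike.norm_conj, norm_norm]
    nlinarith [sq_nonneg (‖h₁ x‖ - ‖h₂ x‖), norm_nonneg (h₁ x), norm_nonneg (h₂ x)]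
  -- the sets
  set s₁ : Set (EuclideanSpace ℝ (Fin 2)) := Metric.ball X₁ r with hs₁_def
  set s₂ : Set (EuclideanSpace ℝ (Fin 2)) := Metric.ball X₂ r with hs₂_def
  have ms₁ : MeasurableSet s₁ := Metric.isOpen_ball.measurableSet
  have ms₂ : MeasurableSet s₂ := Metric.isOpen_ball.measurableSet
  set u : Set (EuclideanSpace ℝ (Fin 2)) := (s₁ ∪ s₂)ᶜ with hu_def
  have mu : MeasurableSet u := (ms₁.union ms₂).compl
  have hdist : dist X₁ X₂ = 2 * r := by rw [dist_eq_norm, hr]; ring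
  have hdisj : Disjoint s₁ s₂ := by
    rw [Set.disjoint_left]
    intro x hx1 hx2
    rw [hs₁_def, Metric.mem_ball] at hx1
    rw [hs₂_def, Metric.mem_ball] at hx2
    have t := dist_triangle X₁ x X₂
    have c1 := dist_comm X₁ x
    have c2 := dist_comm x X₂
    linarith
  have sub12 : ∀ x ∈ s₁, r ≤ ‖x - X₂‖ := by
    intro x hx
    rw [hs₁_def, Metric.mem_ball] at hx
    have t := dist_triangle X₁ x X₂
    have c1 := dist_comm X₁ x
    rw [← dist_eq_norm]
    linarith
  have sub21 : ∀ x ∈ s₂, r ≤ ‖x - X₁‖ := by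
    intro x hx
    rw [hs₂_def, Metric.mem_ball] at hx
    have t := dist_triangle X₁ x X₂
    have c2 := dist_comm x X₂
    have c1 := dist_comm X₁ x
    rw [← dist_eq_norm]
    linarith
  have subu1 : ∀ x ∈ u, r ≤ ‖x - X₁‖ := by
    intro x hx
    rw [hu_def, Set.mem_compl_iff, Set.mem_union, not_or] at hx
    have h1 := hx.1
    rw [hs₁_def, Metric.mem_ball, not_lt] at h1
    rwa [← dist_eq_norm]
  have subu2 : ∀ x ∈ u, r ≤ ‖x - X₂‖ := by
    intro x hx
    rw [hu_def, Set.mem_compl_iff, Set.mem_union, not_or] at hx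
    have h1 := hx.2
    rw [hs₂_def, Metric.mem_ball, not_lt] at h1
    rwa [← dist_eq_norm]
  -- Chebyshev bounds
  have cheb1 : ∫ x in s₂, ‖h₁ x‖ ^ 2 ≤ D₁ / r ^ 2 := by
    rw [hD₁]; exact my_cheb h₁ X₁ hrpos hsq1 hmom1 s₂ ms₂ sub21
  have cheb2 : ∫ x in s₁, ‖h₂ x‖ ^ 2 ≤ D₂ / r ^ 2 := by
    rw [hD₂]; exact my_cheb h₂ X₂ hrpos hsq2 hmom2 s₁ ms₁ sub12
  have chebu1 : ∫ x in u, ‖h₁ x‖ ^ 2 ≤ D₁ / r ^ 2 := by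
    rw [hD₁]; exact my_cheb h₁ X₁ hrpos hsq1 hmom1 u mu subu1
  have chebu2 : ∫ x in u, ‖h₂ x‖ ^ 2 ≤ D₂ / r ^ 2 := by
    rw [hD₂]; exact my_cheb h₂ X₂ hrpos hsq2 hmom2 u mu subu2
  have sqrtdiv : ∀ D : ℝ, 0 ≤ D → Real.sqrt (D / r ^ 2) = Real.sqrt D / r := by
    intro D hD
    rw [Real.sqrt_div hD, Real.sqrt_sq hrpos.le]
  -- splitting
  have hsplit : ∫ x, f x = (∫ x in s₁, f x) + (∫ x in s₂, f x) + ∫ x in u, f x := by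
    have A := integral_add_compl (ms₁.union ms₂) hfint
    have B := setIntegral_union hdisj ms₂ hfint.integrableOn hfint.integrableOn
    rw [← A, B]
  -- the three Cauchy-Schwarz bounds
  have b1 : ‖∫ x in s₁, f x‖ ≤ Real.sqrt D₂ / r := by
    have key := my_csInd H1 H2 MeasurableSet.univ ms₁
    rw [Set.univ_inter, setIntegral_univ, n1, Real.sqrt_one, one_mul] at key
    refine key.trans ?_
    rw [← sqrtdiv D₂ hD₂0]
    exact Real.sqrt_le_sqrt cheb2
  have b2 : ‖∫ x in s₂, f x‖ ≤ Real.sqrt D₁ / r := by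
    have key := my_csInd H1 H2 ms₂ MeasurableSet.univ
    rw [Set.inter_univ, setIntegral_univ, n2, Real.sqrt_one, mul_one] at key
    refine key.trans ?_
    rw [← sqrtdiv D₁ hD₁0]
    exact Real.sqrt_le_sqrt cheb1
  have b3 : ‖∫ x in u, f x‖ ≤ Real.sqrt (D₁ * D₂) / r ^ 2 := by
    have key := my_csInd H1 H2 mu mu
    rw [Set.inter_self] at key
    refine key.trans ?_
    have e : Real.sqrt (D₁ * D₂) / r ^ 2 = (Real.sqrt D₁ / r) * (Real.sqrt D₂ / r) := by
      rw [Real.sqrt_mul hD₁0, div_mul_div_comm, sq]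
    rw [e, ← sqrtdiv D₁ hD₁0, ← sqrtdiv D₂ hD₂0]
    exact mul_le_mul (Real.sqrt_le_sqrt chebu1) (Real.sqrt_le_sqrt chebu2)
      (Real.sqrt_nonneg _) (Real.sqrt_nonneg _)
  calc ‖∫ x, f x‖
      = ‖(∫ x in s₁, f x) + (∫ x in s₂, f x) + ∫ x in u, f x‖ := by rw [hsplit]
    _ ≤ ‖∫ x in s₁, f x‖ + ‖∫ x in s₂, f x‖ + ‖∫ x in u, f x‖ := norm_add₃_le
    _ ≤ Real.sqrt D₂ / r + Real.sqrt D₁ / r + Real.sqrt (D₁ * D₂) / r ^ 2 := by gcongr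
    _ = Real.sqrt D₁ / r + Real.sqrt D₂ / r + Real.sqrt (D₁ * D₂) / r ^ 2 := by ring
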